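/- Let φ: [a,b] → [c,d] be absolutely continuous and strictly increasing. Then for every Lebesgue measurable set A ⊆ [a,b], the image φ(A) is Lebesgue measurable and meas(φ(A)) = ∫_A φ'(x) dx, where φ' denotes the a.e. derivative of φ. -/

import Mathlib

open MeasureTheory Filter Set
open scoped ENNReal NNReal

noncomputable section

/-- **Area formula for strictly increasing absolutely continuous maps.** If
`φ : [a,b] → [c,d]` is absolutely continuous (with a.e. derivative `φ'`, encoded by the
integral representation with integrable `φ'`) and strictly increasing, then for every
Lebesgue measurable `A ⊆ [a,b]` the image `φ(A)` is Lebesgue measurable and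
`meas(φ(A)) = ∫_A φ'`. -/
theorem measure_image_eq_integral_deriv
    (a b c d : ℝ) (hab : a ≤ b) (φ φ' : ℝ → ℝ)
    (hmaps : Set.MapsTo φ (Set.Icc a b) (Set.Icc c d))
    (hmono : StrictMonoOn φ (Set.Icc a b))
    (hint : IntervalIntegrable φ' volume a b)
    (hAC : ∀ x ∈ Set.Icc a b, φ x - φ a = ∫ z in a..x, φ' z) :
    ∀ A : Set ℝ, A ⊆ Set.Icc a b → MeasurableSet A →
      MeasurableSet (φ '' A) ∧
      volume (φ '' A) = ENNReal.ofReal (∫ x in A, φ' x) := by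
  have hInt : IntegrableOn φ' (Set.Icc a b) volume :=
    (intervalIntegrable_iff_integrableOn_Icc_of_le hab).mp hint
  -- continuity of φ on [a,b]
  have hcont : ContinuousOn φ (Set.Icc a b) := by
    have h1 : ContinuousOn (fun x => (∫ z in a..x, φ' z) + φ a) (Set.Icc a b) := by
      have h2 := intervalIntegral.continuousOn_primitive_interval' hint
        (by rw [Set.uIcc_of_le hab]; exact Set.left_mem_Icc.2 hab)
      rw [Set.uIcc_of_le hab] at h2
      exact h2.add continuousOn_const
    exact h1.congr fun x hx => by
      have := hAC x hx
      show φ x = (∫ z in a..x, φ' z) + φ a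
      linarith
  -- the measurable embedding given by restricting φ to [a,b]
  set e : Set.Icc a b → ℝ := (Set.Icc a b).restrict φ with he
  haveI : CompactSpace (Set.Icc a b) := isCompact_iff_compactSpace.mp isCompact_Icc
  have hemb : MeasurableEmbedding e := by
    have hc : Continuous e := hcont.restrict
    have hi : Function.Injective e := fun x y h => Subtype.ext (hmono.injOn x.2 y.2 h)
    exact (hc.isClosedEmbedding hi).measurableEmbedding
  have himg : ∀ A : Set ℝ, A ⊆ Set.Icc a b → e '' (Subtype.val ⁻¹' A) = φ '' A := by
    intro A hA
    ext y
    constructor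
    · rintro ⟨x, hx, rfl⟩; exact ⟨x, hx, rfl⟩
    · rintro ⟨x, hx, rfl⟩; exact ⟨⟨x, hA hx⟩, hx, rfl⟩
  -- measures
  set ρ : Measure ℝ := volume.restrict (Set.Icc a b) with hρ
  set μP : Measure ℝ := ρ.withDensity (fun x => ENNReal.ofReal (φ' x)) with hμP
  set μM : Measure ℝ := ρ.withDensity (fun x => ENNReal.ofReal (-φ' x)) with hμM
  set μ1 : Measure ℝ := (volume.comap e).map Subtype.val with hμ1
  have hμ1_apply : ∀ t : Set ℝ, MeasurableSet t →
      μ1 t = volume (φ '' (t ∩ Set.Icc a b)) := by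
    intro t ht
    rw [hμ1, Measure.map_apply measurable_subtype_coe ht, hemb.comap_apply]
    congr 1
    ext y
    constructor
    · rintro ⟨x, hx, rfl⟩; exact ⟨x, ⟨hx, x.2⟩, rfl⟩
    · rintro ⟨x, ⟨hxt, hxI⟩, rfl⟩; exact ⟨⟨x, hxI⟩, hxt, rfl⟩
  have hμP_apply : ∀ t : Set ℝ, MeasurableSet t →
      μP t = ∫⁻ x in t ∩ Set.Icc a b, ENNReal.ofReal (φ' x) := by
    intro t ht
    rw [hμP, withDensity_apply _ ht, hρ, Measure.restrict_restrict ht]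
  have hμM_apply : ∀ t : Set ℝ, MeasurableSet t →
      μM t = ∫⁻ x in t ∩ Set.Icc a b, ENNReal.ofReal (-φ' x) := by
    intro t ht
    rw [hμM, withDensity_apply _ ht, hρ, Measure.restrict_restrict ht]
  -- FTC on subintervals
  have hiii : ∀ y ∈ Set.Icc a b, IntervalIntegrable φ' volume a y := by
    intro y hy
    apply hint.mono_set
    rw [Set.uIcc_of_le hab, Set.uIcc_of_le hy.1]
    exact Set.Icc_subset_Icc le_rfl hy.2
  have hFTC : ∀ x ∈ Set.Icc a b, ∀ y ∈ Set.Icc a b, φ y - φ x = ∫ z in x..y, φ' z := by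
    intro x hx y hy
    have h1 := hAC x hx
    have h2 := hAC y hy
    have h3 := intervalIntegral.integral_interval_sub_left (hiii y hy) (hiii x hx)
    linarith
  -- image of closed subintervals
  have himIcc : ∀ x ∈ Set.Icc a b, ∀ y ∈ Set.Icc a b, x ≤ y →
      φ '' Set.Icc x y = Set.Icc (φ x) (φ y) := by
    intro x hx y hy hxy
    apply Set.Subset.antisymm
    · rintro _ ⟨z, hz, rfl⟩
      have hz' : z ∈ Set.Icc a b := ⟨hx.1.trans hz.1, hz.2.trans hy.2⟩
      exact ⟨hmono.monotoneOn hx hz' hz.1, hmono.monotoneOn hz' hy hz.2⟩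
    · exact intermediate_value_Icc hxy (hcont.mono (Set.Icc_subset_Icc hx.1 hy.2))
  have hvol : ∀ x ∈ Set.Icc a b, ∀ y ∈ Set.Icc a b, x ≤ y →
      volume (φ '' Set.Ioc x y) = ENNReal.ofReal (∫ z in x..y, φ' z) := by
    intro x hx y hy hxy
    have h1 : volume (φ '' Set.Icc x y) = ENNReal.ofReal (∫ z in x..y, φ' z) := by
      rw [himIcc x hx y hy hxy, Real.volume_Icc, ← hFTC x hx y hy]
    have h2 : φ '' Set.Icc x y = insert (φ x) (φ '' Set.Ioc x y) := by
      rw [← Set.Ioc_insert_left hxy, Set.image_insert_eq]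
    refine le_antisymm ?_ ?_
    · calc volume (φ '' Set.Ioc x y) ≤ volume (φ '' Set.Icc x y) :=
            measure_mono (Set.image_mono Set.Ioc_subset_Icc_self)
        _ = _ := h1
    · rw [← h1, h2, Set.insert_eq]
      calc volume ({φ x} ∪ φ '' Set.Ioc x y)
          ≤ volume ({φ x} : Set ℝ) + volume (φ '' Set.Ioc x y) := measure_union_le _ _
        _ = volume (φ '' Set.Ioc x y) := by rw [Real.volume_singleton, zero_add]
  -- finiteness of μP
  have hofle : ∀ z : ℝ, ENNReal.ofReal (φ' z) ≤ (‖φ' z‖₊ : ℝ≥0∞) := by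
    intro z
    rw [← enorm_eq_nnnorm, Real.enorm_eq_ofReal_abs]
    exact ENNReal.ofReal_le_ofReal (le_abs_self _)
  have hofle' : ∀ z : ℝ, ENNReal.ofReal (-φ' z) ≤ (‖φ' z‖₊ : ℝ≥0∞) := by
    intro z
    rw [← enorm_eq_nnnorm, Real.enorm_eq_ofReal_abs]
    exact ENNReal.ofReal_le_ofReal (neg_le_abs _)
  have hPtop : μP Set.univ < ⊤ := by
    rw [hμP, withDensity_apply _ MeasurableSet.univ, Measure.restrict_univ]
    calc ∫⁻ x, ENNReal.ofReal (φ' x) ∂ρ ≤ ∫⁻ x, (‖φ' x‖₊ : ℝ≥0∞) ∂ρ :=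
          lintegral_mono fun z => hofle z
      _ < ⊤ := hInt.2
  -- the key measure identity μP = μM + μ1
  have hext : μP = μM + μ1 := by
    refine Measure.ext_of_Ioc' _ _ (fun u v _ => ?_) (fun u v huv => ?_)
    · exact ((measure_mono (Set.subset_univ _)).trans_lt hPtop).ne
    · set x := max u a with hxdef
      set y := min v b with hydef
      have hsub1 : Set.Ioc x y ⊆ Set.Ioc u v ∩ Set.Icc a b := by
        intro z hz
        exact ⟨⟨(le_max_left u a).trans_lt hz.1, hz.2.trans (min_le_left v b)⟩,
          ⟨(le_max_right u a).trans hz.1.le, hz.2.trans (min_le_right v b)⟩⟩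
      have hsub2 : Set.Ioc u v ∩ Set.Icc a b ⊆ Set.Icc x y := by
        intro z hz
        exact ⟨max_le hz.1.1.le hz.2.1, le_min hz.1.2 hz.2.2⟩
      rw [Measure.add_apply, hμP_apply _ measurableSet_Ioc, hμM_apply _ measurableSet_Ioc,
        hμ1_apply _ measurableSet_Ioc]
      by_cases hxy : x ≤ y
      · have hxI : x ∈ Set.Icc a b := ⟨le_max_right u a, hxy.trans (min_le_right v b)⟩
        have hyI : y ∈ Set.Icc a b := ⟨(le_max_right u a).trans hxy, min_le_right v b⟩
        have hae : (Set.Ioc u v ∩ Set.Icc a b : Set ℝ) =ᵐ[volume] Set.Ioc x y := by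
          rw [Filter.eventuallyEq_set]
          have hnull : volume ({x} : Set ℝ) = 0 := Real.volume_singleton
          filter_upwards [measure_eq_zero_iff_ae_notMem.mp hnull] with z hz
          constructor
          · intro h
            rcases (hsub2 h).1.lt_or_eq with h' | h'
            · exact ⟨h', (hsub2 h).2⟩
            · exact absurd h'.symm hz
          · intro h; exact hsub1 h
        have hims : volume (φ '' (Set.Ioc u v ∩ Set.Icc a b)) = volume (φ '' Set.Ioc x y) := by
          refine le_antisymm ?_ (measure_mono (Set.image_mono hsub1))
          have hss : φ '' (Set.Ioc u v ∩ Set.Icc a b) ⊆ insert (φ x) (φ '' Set.Ioc x y) := by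
            rw [← Set.image_insert_eq, Set.Ioc_insert_left hxy]
            exact Set.image_mono hsub2
          calc volume (φ '' (Set.Ioc u v ∩ Set.Icc a b))
              ≤ volume (insert (φ x) (φ '' Set.Ioc x y)) := measure_mono hss
            _ ≤ volume ({φ x} : Set ℝ) + volume (φ '' Set.Ioc x y) := by
                rw [Set.insert_eq]; exact measure_union_le _ _
            _ = volume (φ '' Set.Ioc x y) := by rw [Real.volume_singleton, zero_add]
        rw [setLIntegral_congr hae, setLIntegral_congr hae, hims,
          hvol x hxI y hyI hxy]
        -- now pure arithmetic with lintegrals on Ioc x y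
        have hIocsub : Set.Ioc x y ⊆ Set.Icc a b :=
          Set.Ioc_subset_Icc_self.trans (Set.Icc_subset_Icc hxI.1 hyI.2)
        have hIint : Integrable φ' (volume.restrict (Set.Ioc x y)) := hInt.mono_set hIocsub
        set p := ∫⁻ z in Set.Ioc x y, ENNReal.ofReal (φ' z) with hp
        set m := ∫⁻ z in Set.Ioc x y, ENNReal.ofReal (-φ' z) with hm
        have hptop : p ≠ ⊤ := by
          refine ((lintegral_mono fun z => hofle z).trans_lt ?_).ne
          exact hIint.2
        have hmtop : m ≠ ⊤ := by
          refine ((lintegral_mono fun z => hofle' z).trans_lt ?_).ne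
          exact hIint.2
        have hIeq : ∫ z in x..y, φ' z = p.toReal - m.toReal := by
          rw [intervalIntegral.integral_of_le hxy]
          exact integral_eq_lintegral_pos_part_sub_lintegral_neg_part hIint
        have hI : (0:ℝ) ≤ ∫ z in x..y, φ' z := by
          rw [← hFTC x hxI y hyI]
          have := hmono.monotoneOn hxI hyI hxy
          linarith
        have hmp : m ≤ p := by
          refine (ENNReal.toReal_le_toReal hmtop hptop).1 ?_
          linarith [hIeq, hI]
        have hofI : ENNReal.ofReal (∫ z in x..y, φ' z) = p - m := by
          rw [hIeq, ENNReal.ofReal_sub _ ENNReal.toReal_nonneg,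
            ENNReal.ofReal_toReal hptop, ENNReal.ofReal_toReal hmtop]
        rw [hofI]
        exact (add_tsub_cancel_of_le hmp).symm
      · have hs : Set.Ioc u v ∩ Set.Icc a b = ∅ := by
          rw [← Set.subset_empty_iff, ← Set.Icc_eq_empty hxy]
          exact hsub2
        rw [hs]
        simp
  -- a.e. nonnegativity of φ' on [a,b]
  have hsm : AEStronglyMeasurable φ' ρ := hInt.1
  set g : ℝ → ℝ := hsm.mk φ' with hgdef
  have hgmeas : Measurable g := hsm.stronglyMeasurable_mk.measurable
  have hgae : φ' =ᵐ[ρ] g := hsm.ae_eq_mk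
  set s0 : Set ℝ := {x | g x < 0} ∩ Set.Icc a b with hs0def
  have hs0meas : MeasurableSet s0 :=
    (measurableSet_lt hgmeas measurable_const).inter measurableSet_Icc
  have hs0sub : s0 ⊆ Set.Icc a b := Set.inter_subset_right
  have hs0inter : s0 ∩ Set.Icc a b = s0 := Set.inter_eq_left.2 hs0sub
  have hgae0 : ∀ᵐ z ∂(volume.restrict s0), φ' z = g z := by
    have : (volume.restrict s0) ≤ ρ := by
      rw [hρ]
      intro t
      exact Measure.restrict_mono hs0sub le_rfl t
    exact ae_restrict_of_ae_restrict_of_subset hs0sub (by rw [← hρ]; exact hgae)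
  have hμPs0 : μP s0 = 0 := by
    rw [hμP_apply s0 hs0meas, hs0inter]
    rw [lintegral_congr_ae (hgae0.mono fun z hz => by rw [hz])]
    rw [setLIntegral_congr_fun hs0meas (fun z hz => ?_),
      lintegral_zero]
    rw [ENNReal.ofReal_eq_zero]
    exact hz.1.le
  have hμMs0 : μM s0 = 0 := by
    have := hext ▸ hμPs0
    rw [Measure.add_apply] at this
    exact (add_eq_zero.mp this).1
  have hs0null : volume s0 = 0 := by
    have h1 : (∫⁻ z in s0, ENNReal.ofReal (-g z)) = 0 := by
      have hae' : (fun z => ENNReal.ofReal (-φ' z)) =ᵐ[volume.restrict s0]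
          (fun z => ENNReal.ofReal (-g z)) :=
        hgae0.mono fun z hz => by dsimp only; rw [hz]
      have hc : (∫⁻ z in s0, ENNReal.ofReal (-φ' z)) = ∫⁻ z in s0, ENNReal.ofReal (-g z) :=
        lintegral_congr_ae hae'
      rw [← hc, ← hs0inter, ← hμM_apply s0 hs0meas]
      exact hμMs0
    have h2 := (lintegral_eq_zero_iff' ((hgmeas.neg.ennreal_ofReal).aemeasurable)).mp h1
    have h2' : ∀ᵐ x ∂(volume : Measure ℝ), x ∈ s0 → ENNReal.ofReal (-g x) = 0 :=
      (ae_restrict_iff' hs0meas).mp (h2.mono fun x hx => hx)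
    rw [ae_iff] at h2'
    refine measure_mono_null ?_ h2'
    intro z hz
    simp only [Set.mem_setOf_eq, Classical.not_imp]
    refine ⟨hz, ?_⟩
    intro h0
    rw [ENNReal.ofReal_eq_zero, neg_nonpos] at h0
    exact absurd h0 (not_le.2 hz.1)
  have hnn : 0 ≤ᵐ[ρ] φ' := by
    have hgnn : ∀ᵐ z ∂ρ, 0 ≤ g z := by
      rw [hρ, ae_restrict_iff' measurableSet_Icc, ae_iff]
      refine measure_mono_null ?_ hs0null
      intro z hz
      simp only [Set.mem_setOf_eq, Classical.not_imp, not_le] at hz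
      exact ⟨hz.2, hz.1⟩
    filter_upwards [hgnn, hgae] with z h1 h2
    rw [Pi.zero_apply, h2]
    exact h1
  have hμM0 : μM = 0 := by
    rw [hμM]
    have : (fun x => ENNReal.ofReal (-φ' x)) =ᵐ[ρ] (fun _ => (0:ℝ≥0∞)) := by
      filter_upwards [hnn] with z hz
      rw [ENNReal.ofReal_eq_zero, neg_nonpos]
      exact hz
    rw [withDensity_congr_ae this]
    exact withDensity_zero
  have hμ1P : μ1 = μP := by
    rw [hext, hμM0, zero_add]
  -- conclusion
  intro A hA hAm
  have hiA : φ '' A = e '' (Subtype.val ⁻¹' A) := (himg A hA).symm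
  constructor
  · rw [hiA]
    exact hemb.measurableSet_image' (measurable_subtype_coe hAm)
  · have h1 : volume (φ '' A) = μ1 A := by
      rw [hμ1_apply A hAm, Set.inter_eq_left.2 hA]
    rw [h1, hμ1P, hμP_apply A hAm, Set.inter_eq_left.2 hA]
    rw [← ofReal_integral_eq_lintegral_ofReal (hInt.mono_set hA)
      (ae_restrict_of_ae_restrict_of_subset hA (by rw [← hρ]; exact hnn))]
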